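/- Let X : Primes → ℕ⁺ be any function assigning a positive integer to each prime, and let T = { n ≥ 2 : for every prime p dividing n, p^{X(p)} exactly divides n }. Then T contains no 3-term geometric progression (a, ar, ar²) with rational ratio r > 1 where all three terms are integers. -/
import Mathlib


/-- For any assignment X of positive integers to primes, the set
T = {n ≥ 2 : p ∣ n → p^{X(p)} ∥ n} contains no 3-term geometric progression with
rational ratio r > 1, i.e. no triple a < b < c in T with b² = a·c. -/
theorem Tset_gpf (X : {p : ℕ // p.Prime} → ℕ+) :
    ∀ a ∈ {n : ℕ | 2 ≤ n ∧ ∀ p : ℕ, (hp : p.Prime) → p ∣ n →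
        p ^ (X ⟨p, hp⟩ : ℕ) ∣ n ∧ ¬ p ^ ((X ⟨p, hp⟩ : ℕ) + 1) ∣ n},
      ∀ b ∈ {n : ℕ | 2 ≤ n ∧ ∀ p : ℕ, (hp : p.Prime) → p ∣ n →
        p ^ (X ⟨p, hp⟩ : ℕ) ∣ n ∧ ¬ p ^ ((X ⟨p, hp⟩ : ℕ) + 1) ∣ n},
      ∀ c ∈ {n : ℕ | 2 ≤ n ∧ ∀ p : ℕ, (hp : p.Prime) → p ∣ n →
        p ^ (X ⟨p, hp⟩ : ℕ) ∣ n ∧ ¬ p ^ ((X ⟨p, hp⟩ : ℕ) + 1) ∣ n},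
      a < b → b < c → b * b ≠ a * c := by
  rintro a ⟨ha2, hA⟩ b ⟨hb2, hB⟩ c ⟨hc2, hC⟩ hab hbc heq
  have ha0 : a ≠ 0 := by omega
  have hb0 : b ≠ 0 := by omega
  have hc0 : c ≠ 0 := by omega
  have val : ∀ n, n ≠ 0 →
      (∀ p : ℕ, (hp : p.Prime) → p ∣ n →
        p ^ (X ⟨p, hp⟩ : ℕ) ∣ n ∧ ¬ p ^ ((X ⟨p, hp⟩ : ℕ) + 1) ∣ n) →
      ∀ p : ℕ, (hp : p.Prime) → p ∣ n → n.factorization p = (X ⟨p, hp⟩ : ℕ) := by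
    intro n hn h p hp hpn
    obtain ⟨h1, h2⟩ := h p hp hpn
    have hle : (X ⟨p, hp⟩ : ℕ) ≤ n.factorization p :=
      (Nat.Prime.pow_dvd_iff_le_factorization hp hn).mp h1
    have hlt : ¬ ((X ⟨p, hp⟩ : ℕ) + 1 ≤ n.factorization p) := fun h' =>
      h2 ((Nat.Prime.pow_dvd_iff_le_factorization hp hn).mpr h')
    omega
  have key : ∀ p : ℕ, a.factorization p = b.factorization p := by
    intro p
    by_cases hp : p.Prime
    · have hsum : b.factorization p + b.factorization p
          = a.factorization p + c.factorization p := by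
        have := congrArg (Nat.factorization · p) heq
        simpa [Nat.factorization_mul, hb0, ha0, hc0] using this
      have hXpos : 0 < (X ⟨p, hp⟩ : ℕ) := (X ⟨p, hp⟩).pos
      have fb : b.factorization p = 0 ∨ b.factorization p = (X ⟨p, hp⟩ : ℕ) := by
        by_cases hpb : p ∣ b
        · exact Or.inr (val b hb0 hB p hp hpb)
        · exact Or.inl (Nat.factorization_eq_zero_of_not_dvd hpb)
      have fa : a.factorization p = 0 ∨ a.factorization p = (X ⟨p, hp⟩ : ℕ) := by
        by_cases hpa : p ∣ a
        · exact Or.inr (val a ha0 hA p hp hpa)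
        · exact Or.inl (Nat.factorization_eq_zero_of_not_dvd hpa)
      have fc : c.factorization p = 0 ∨ c.factorization p = (X ⟨p, hp⟩ : ℕ) := by
        by_cases hpc : p ∣ c
        · exact Or.inr (val c hc0 hC p hp hpc)
        · exact Or.inl (Nat.factorization_eq_zero_of_not_dvd hpc)
      omega
    · rw [Nat.factorization_eq_zero_of_not_prime a hp,
        Nat.factorization_eq_zero_of_not_prime b hp]
  exact absurd (Nat.eq_of_factorization_eq ha0 hb0 key) (by omega)
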